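/- Let 𝔄 be a p-structure and fix a ∈ L^p(X,V). Define T : L^p_+(X) → L^q_+(X) by Tα := Π_+(𝔄(·, a+α)) (this is meaningful because |𝔄(x,v)| ≲ |v|^{p−1} implies 𝔄(·, a+α) ∈ L^q(X,V), and Π_+ is bounded on L^q). Then: (1) T is continuous; (2) T is strictly monotone, i.e. ∫_X ⟨Tα₁ − Tα₂ | α₁ − α₂⟩ dx > 0 whenever α₁ ≠ α₂ in L^p_+(X); and (3) T is coercive, i.e. ∫_X ⟨Tα | α⟩ dx / ‖α‖_p → ∞ as ‖α‖_p → ∞ with α ∈ L^p_+(X). -/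

import Mathlib

open MeasureTheory ENNReal
open scoped RealInnerProductSpace

noncomputable section

variable {X : Type*} [MeasurableSpace X] {V : Type*}
  [NormedAddCommGroup V] [InnerProductSpace ℝ V] [FiniteDimensional ℝ V]
  [MeasurableSpace V] [BorelSpace V]

/-- Membership in `L^s(X, V)` for a real exponent `s`. -/
def MemLs (μ : Measure X) (s : ℝ) (f : X → V) : Prop :=
  MemLp f (ENNReal.ofReal s) μ

/-- Membership in `L^*(X) = ⋂_{1 ≤ s ≤ ∞} L^s(X, V)`. -/
def MemLstar (μ : Measure X) (f : X → V) : Prop :=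
  MemLp f ⊤ μ ∧ ∀ s : ℝ, 1 ≤ s → MemLp f (ENNReal.ofReal s) μ

/-- The orthogonal complement in `L²(X, V)` of a set `K` of functions, at the level of
functions: all `g ∈ L²` whose inner product with every member of `K` integrates to `0`. -/
def OrthCompl (μ : Measure X) (K : Set (X → V)) : Set (X → V) :=
  {g | MemLp g 2 μ ∧ ∀ f ∈ K, ∫ x, ⟪f x, g x⟫ ∂μ = 0}

/-- `K` is (the set of representatives of) a closed linear subspace of `L²(X, V)`. -/
structure IsClosedL2Subspace (μ : Measure X) (K : Set (X → V)) : Prop where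
  mem_L2 : ∀ f ∈ K, MemLp f 2 μ
  zero_mem : (0 : X → V) ∈ K
  add_mem : ∀ ⦃f⦄, f ∈ K → ∀ ⦃g⦄, g ∈ K → f + g ∈ K
  smul_mem : ∀ (c : ℝ) ⦃f⦄, f ∈ K → c • f ∈ K
  ae_mem : ∀ ⦃f⦄, f ∈ K → ∀ ⦃g : X → V⦄, f =ᵐ[μ] g → g ∈ K
  closed : ∀ ⦃f : X → V⦄, MemLp f 2 μ →
    (∀ ε : ℝ, 0 < ε → ∃ g ∈ K, eLpNorm (f - g) 2 μ < ENNReal.ofReal ε) → f ∈ K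

/-- `LsCl μ K s` is the closure of `K ∩ L^s(X,V)` in the `L^s`-norm: the space `L^s_+(X)`
(for `K = L²_+`) resp. `L^s_-(X)` (for `K = L²_-`) of the paper. -/
def LsCl (μ : Measure X) (K : Set (X → V)) (s : ℝ) : Set (X → V) :=
  {f | MemLs μ s f ∧ ∀ ε : ℝ, 0 < ε → ∃ g ∈ K, MemLs μ s g ∧
        eLpNorm (f - g) (ENNReal.ofReal s) μ < ENNReal.ofReal ε}

/-- The orthogonal projections `Π₊` onto `K` and `Π₋ = I - Π₊` are bounded in the `L^s`-norm:
whenever `ω ∈ L² ∩ L^s` is decomposed as `ω = α + (ω - α)` with `α ∈ K` and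
`ω - α ⟂ K`, both pieces obey an `L^s` bound. -/
def ProjBounded (μ : Measure X) (K : Set (X → V)) (s : ℝ) : Prop :=
  ∃ M : ℝ, ∀ ω α : X → V, MemLp ω 2 μ → MemLs μ s ω → α ∈ K →
    (ω - α) ∈ OrthCompl μ K →
    eLpNorm α (ENNReal.ofReal s) μ ≤ ENNReal.ofReal M * eLpNorm ω (ENNReal.ofReal s) μ ∧
    eLpNorm (ω - α) (ENNReal.ofReal s) μ ≤ ENNReal.ofReal M * eLpNorm ω (ENNReal.ofReal s) μ

/-- `A : X × V → V` is a `p`-structure: Carathéodory regular, `(p−1)`-homogeneous,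
Lipschitz and monotone (with the rpow convention for the degenerate case `v₁ = v₂ = 0`
when `p < 2`). -/
structure IsPStructure (μ : Measure X) (p : ℝ) (A : X → V → V) (CA cA : ℝ) : Prop where
  measurable_x : ∀ v : V, Measurable fun x => A x v
  continuous_v : ∀ᵐ x ∂μ, Continuous fun v => A x v
  homog : ∀ᵐ x ∂μ, ∀ l : ℝ, 0 ≤ l → ∀ v : V, A x (l • v) = l ^ (p - 1) • A x v
  lipschitz : ∀ᵐ x ∂μ, ∀ v₁ v₂ : V,
    ‖A x v₁ - A x v₂‖ ≤ CA * ((‖v₁‖ + ‖v₂‖) ^ (p - 2) * ‖v₁ - v₂‖)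
  monotone : ∀ᵐ x ∂μ, ∀ v₁ v₂ : V,
    cA * ((‖v₁‖ + ‖v₂‖) ^ (p - 2) * ‖v₁ - v₂‖ ^ (2 : ℝ)) ≤ ⟪A x v₁ - A x v₂, v₁ - v₂⟫

/-- `(α, β) = ℜf` solves the `(p,q)`-system for the data `f = (a, b)`:
`α ∈ L^p_+(X)`, `β ∈ L^q_-(X)` and `𝔄(x, a+α) = b+β` a.e. -/
def Solves (μ : Measure X) (K : Set (X → V)) (A : X → V → V) (p q : ℝ)
    (a b α β : X → V) : Prop :=
  α ∈ LsCl μ K p ∧ β ∈ LsCl μ (OrthCompl μ K) q ∧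
    (fun x => A x (a x + α x)) =ᵐ[μ] fun x => b x + β x

/-- The bracket `[f] = |a|^p + |b|^q` of a pair `f = (a, b)`. -/
def br (p q : ℝ) (a b : X → V) (x : X) : ℝ :=
  ‖a x‖ ^ p + ‖b x‖ ^ q

/-- The operator `ℜ` is of weak `λ`-type: for data `f = (a,b) ∈ L^* × L^*`, the solution
`ℜf = (α,β)` lies in `L^{λp} × L^{λq}` and satisfies
`meas{x : [ℜf(x)] > t} ≤ C t^{−λ} ∫ [f]^λ` for all `t > 0`. -/
def WeakType (μ : Measure X) (K : Set (X → V)) (A : X → V → V) (p q lam : ℝ) : Prop :=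
  ∃ C : ℝ, ∀ a b α β : X → V, MemLstar μ a → MemLstar μ b →
    Solves μ K A p q a b α β →
    MemLs μ (lam * p) α ∧ MemLs μ (lam * q) β ∧
    ∀ t : ℝ, 0 < t →
      μ {x | t < br p q α β x} ≤
        ENNReal.ofReal (C * t ^ (-lam) * ∫ x, br p q a b x ^ lam ∂μ)


/-- Carathéodory composition is a.e.-strongly-measurable. -/
lemma mb_aesm_comp {μ : Measure X} {A : X → V → V}
    (hmx : ∀ v : V, Measurable fun x => A x v)
    (hcv : ∀ᵐ x ∂μ, Continuous fun v => A x v)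
    {f : X → V} (hf : AEStronglyMeasurable f μ) :
    AEStronglyMeasurable (fun x => A x (f x)) μ := by
  classical
  set s : Set X := toMeasurable μ {x | ¬ Continuous fun v => A x v} with hs
  have hνs : μ s = 0 := by
    rw [hs, measure_toMeasurable]
    exact hcv
  set A' : X → V → V := fun x v => if x ∈ s then 0 else A x v with hA'
  have hmeas : ∀ v, Measurable fun x => A' x v := by
    intro v
    exact Measurable.ite (measurableSet_toMeasurable μ _) measurable_const (hmx v)
  have hcont : ∀ x, Continuous fun v => A' x v := by
    intro x
    by_cases hx : x ∈ s
    · simpa [hA', hx] using continuous_const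
    · have hx2 : Continuous fun v => A x v := by
        by_contra hc
        exact hx (subset_toMeasurable μ _ hc)
      simpa [hA', hx] using hx2
  have huncur : Measurable (Function.uncurry fun v x => A' x v) :=
    measurable_uncurry_of_continuous_of_measurable hcont hmeas
  have hfm : Measurable (hf.mk f) := hf.stronglyMeasurable_mk.measurable
  have h1 : Measurable fun x => A' x (hf.mk f x) :=
    huncur.comp (hfm.prodMk measurable_id)
  refine h1.aestronglyMeasurable.congr ?_
  filter_upwards [hf.ae_eq_mk, measure_eq_zero_iff_ae_notMem.mp hνs] with x h1 h2
  simp [hA', h2, ← h1]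

/-- Growth bound `‖A x v‖ ≤ CA ‖v‖^(p-1)` from homogeneity and the Lipschitz bound. -/
lemma mb_growth {μ : Measure X} {p : ℝ} {A : X → V → V} {CA cA : ℝ}
    (hp : 1 < p) (hA : IsPStructure μ p A CA cA) :
    ∀ᵐ x ∂μ, ∀ v : V, ‖A x v‖ ≤ CA * ‖v‖ ^ (p - 1) := by
  have hne : p - 1 ≠ 0 := ne_of_gt (by linarith)
  filter_upwards [hA.homog, hA.lipschitz] with x hh hl
  have h0 : A x 0 = 0 := by
    have := hh 0 le_rfl 0
    simpa [Real.zero_rpow hne] using this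
  intro v
  rcases eq_or_ne v 0 with hv | hv
  · simp [hv, h0, Real.zero_rpow hne]
  · have hvpos : 0 < ‖v‖ := norm_pos_iff.mpr hv
    have := hl v 0
    rw [h0, sub_zero, sub_zero] at this
    calc ‖A x v‖ ≤ CA * ((‖v‖ + ‖(0 : V)‖) ^ (p - 2) * ‖v‖) := this
      _ = CA * ‖v‖ ^ (p - 1) := by
          rw [norm_zero, add_zero]
          congr 1
          rw [show p - 1 = (p - 2) + 1 by ring, Real.rpow_add_one hvpos.ne']

/-- Membership of `x ↦ A x (f x)` in `L^q`. -/
lemma mb_memA {μ : Measure X} {p q : ℝ} {A : X → V → V} {CA cA : ℝ}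
    (hp : 1 < p) (hq0 : 0 ≤ q) (hqp' : q * (p - 1) = p)
    (hA : IsPStructure μ p A CA cA)
    {f : X → V} (hf : MemLp f (ENNReal.ofReal p) μ) :
    MemLp (fun x => A x (f x)) (ENNReal.ofReal q) μ := by
  have hb := mb_growth hp hA
  have hsm := mb_aesm_comp hA.measurable_x hA.continuous_v hf.1
  have h1 : MemLp (fun x => ‖f x‖ ^ (p - 1)) (ENNReal.ofReal q) μ := by
    refine ⟨(hf.1.norm.aemeasurable.pow_const _).aestronglyMeasurable, ?_⟩
    rw [eLpNorm_norm_rpow f (by linarith : (0:ℝ) < p - 1)]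
    have he : ENNReal.ofReal q * ENNReal.ofReal (p - 1) = ENNReal.ofReal p := by
      rw [← ENNReal.ofReal_mul hq0, hqp']
    rw [he]
    exact ENNReal.rpow_lt_top_of_nonneg (by linarith) hf.2.ne
  have hg : MemLp (fun x => CA * ‖f x‖ ^ (p - 1)) (ENNReal.ofReal q) μ :=
    (h1.const_smul CA).ae_eq (Filter.Eventually.of_forall fun x => by simp [smul_eq_mul])
  refine MemLp.of_le hg hsm ?_
  filter_upwards [hb] with x hx
  exact (hx (f x)).trans (le_abs_self _)

/-- `toReal` of the `eLpNorm` as an integral. -/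
lemma mb_toReal_eLpNorm {μ : Measure X} {s : ℝ} (hs : 0 < s)
    {f : X → V} (hf : MemLp f (ENNReal.ofReal s) μ) :
    (eLpNorm f (ENNReal.ofReal s) μ).toReal = (∫ x, ‖f x‖ ^ s ∂μ) ^ (1 / s) := by
  rw [hf.eLpNorm_eq_integral_rpow_norm (by simp [hs]) (by simp),
    ENNReal.toReal_ofReal
      (Real.rpow_nonneg (integral_nonneg fun x => Real.rpow_nonneg (norm_nonneg _) _) _)]
  simp [ENNReal.toReal_ofReal hs.le, one_div]

/-- The integral of `‖f‖^s` in terms of the `eLpNorm`. -/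
lemma mb_integral_norm_rpow {μ : Measure X} {s : ℝ} (hs : 0 < s)
    {f : X → V} (hf : MemLp f (ENNReal.ofReal s) μ) :
    ∫ x, ‖f x‖ ^ s ∂μ = (eLpNorm f (ENNReal.ofReal s) μ).toReal ^ s := by
  rw [mb_toReal_eLpNorm hs hf, one_div,
    Real.rpow_inv_rpow (integral_nonneg fun x => Real.rpow_nonneg (norm_nonneg _) _) hs.ne']

/-- Hölder's inequality for the inner product pairing. -/
lemma mb_holder {μ : Measure X} {s t : ℝ} (hst : s.HolderConjugate t) {f g : X → V}
    (hf : MemLp f (ENNReal.ofReal s) μ) (hg : MemLp g (ENNReal.ofReal t) μ) :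
    Integrable (fun x => ⟪f x, g x⟫) μ ∧ Integrable (fun x => ‖f x‖ * ‖g x‖) μ ∧
      |∫ x, ⟪f x, g x⟫ ∂μ| ≤
        (eLpNorm f (ENNReal.ofReal s) μ).toReal * (eLpNorm g (ENNReal.ofReal t) μ).toReal ∧
      ∫ x, ‖f x‖ * ‖g x‖ ∂μ ≤
        (eLpNorm f (ENNReal.ofReal s) μ).toReal * (eLpNorm g (ENNReal.ofReal t) μ).toReal := by
  have hcond : (1 : ℝ≥0∞) / 1 = 1 / ENNReal.ofReal s + 1 / ENNReal.ofReal t := by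
    simp only [one_div]
    rw [inv_one, ← hst.inv_add_inv_ennreal]
  have hnn : MemLp ((fun x => ‖f x‖) • fun x => ‖g x‖) 1 μ :=
    by
      haveI : ENNReal.HolderTriple (ENNReal.ofReal s) (ENNReal.ofReal t) 1 :=
        ⟨by simpa only [one_div, inv_one] using hcond.symm⟩
      exact MemLp.smul hg.norm hf.norm
  have hprod : Integrable (fun x => ‖f x‖ * ‖g x‖) μ := by
    have := memLp_one_iff_integrable.mp hnn
    exact this.congr (Filter.Eventually.of_forall fun x => by simp [smul_eq_mul])
  have hint : Integrable (fun x => ⟪f x, g x⟫) μ := by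
    refine hprod.mono' (AEStronglyMeasurable.inner hf.1 hg.1) ?_
    filter_upwards with x
    rw [Real.norm_eq_abs]
    exact abs_real_inner_le_norm _ _
  have hpb : ∫ x, ‖f x‖ * ‖g x‖ ∂μ ≤
      (eLpNorm f (ENNReal.ofReal s) μ).toReal * (eLpNorm g (ENNReal.ofReal t) μ).toReal := by
    calc ∫ x, ‖f x‖ * ‖g x‖ ∂μ
        ≤ (∫ x, ‖f x‖ ^ s ∂μ) ^ (1 / s) * (∫ x, ‖g x‖ ^ t ∂μ) ^ (1 / t) :=
        integral_mul_norm_le_Lp_mul_Lq hst hf hg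
      _ = _ := by rw [mb_toReal_eLpNorm hst.pos hf, mb_toReal_eLpNorm hst.symm.pos hg]
  refine ⟨hint, hprod, ?_, hpb⟩
  have habs : |∫ x, ⟪f x, g x⟫ ∂μ| ≤ ∫ x, |⟪f x, g x⟫| ∂μ := by
    simpa [Real.norm_eq_abs] using
      norm_integral_le_integral_norm (μ := μ) (fun x => ⟪f x, g x⟫)
  calc |∫ x, ⟪f x, g x⟫ ∂μ| ≤ ∫ x, |⟪f x, g x⟫| ∂μ := habs
    _ ≤ ∫ x, ‖f x‖ * ‖g x‖ ∂μ :=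
        integral_mono hint.abs hprod fun x => abs_real_inner_le_norm _ _
    _ ≤ _ := hpb

/-- `LsCl` is closed under subtraction whenever the core set is. -/
lemma mb_sub_LsCl {μ : Measure X} {K' : Set (X → V)} {s : ℝ} (hs : 1 ≤ s)
    (hsub : ∀ f ∈ K', ∀ g ∈ K', f - g ∈ K')
    {f g : X → V} (hf : f ∈ LsCl μ K' s) (hg : g ∈ LsCl μ K' s) :
    f - g ∈ LsCl μ K' s := by
  have hS1 : 1 ≤ ENNReal.ofReal s := by
    rw [show (1 : ℝ≥0∞) = ENNReal.ofReal 1 by simp]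
    exact ENNReal.ofReal_le_ofReal hs
  refine ⟨hf.1.sub hg.1, fun ε hε => ?_⟩
  obtain ⟨g₁, hg₁K, hg₁L, hg₁⟩ := hf.2 (ε / 2) (by linarith)
  obtain ⟨g₂, hg₂K, hg₂L, hg₂⟩ := hg.2 (ε / 2) (by linarith)
  refine ⟨g₁ - g₂, hsub _ hg₁K _ hg₂K, hg₁L.sub hg₂L, ?_⟩
  have hfe : f - g - (g₁ - g₂) = (f - g₁) - (g - g₂) := by abel
  rw [hfe]
  calc eLpNorm ((f - g₁) - (g - g₂)) (ENNReal.ofReal s) μ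
      ≤ eLpNorm (f - g₁) (ENNReal.ofReal s) μ + eLpNorm (g - g₂) (ENNReal.ofReal s) μ :=
        eLpNorm_sub_le (hf.1.1.sub hg₁L.1) (hg.1.1.sub hg₂L.1) hS1
    _ < ENNReal.ofReal (ε / 2) + ENNReal.ofReal (ε / 2) := ENNReal.add_lt_add hg₁ hg₂
    _ = ENNReal.ofReal ε := by
        rw [← ENNReal.ofReal_add (by linarith) (by linarith)]
        norm_num


/-- `OrthCompl` is closed under subtraction. -/
lemma mb_orth_sub {μ : Measure X} {K : Set (X → V)} (hK : IsClosedL2Subspace μ K) :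
    ∀ f ∈ OrthCompl μ K, ∀ g ∈ OrthCompl μ K, f - g ∈ OrthCompl μ K := by
  intro f hf g hg
  refine ⟨hf.1.sub hg.1, fun k hk => ?_⟩
  have h22 : (2:ℝ).HolderConjugate 2 := by constructor <;> norm_num
  have h2e : (ENNReal.ofReal 2) = (2 : ℝ≥0∞) := by norm_num
  have hk2 : MemLp k (ENNReal.ofReal 2) μ := h2e ▸ hK.mem_L2 k hk
  have hif : Integrable (fun x => ⟪k x, f x⟫) μ := (mb_holder h22 hk2 (h2e ▸ hf.1)).1
  have hig : Integrable (fun x => ⟪k x, g x⟫) μ := (mb_holder h22 hk2 (h2e ▸ hg.1)).1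
  have hfg : (fun x => ⟪k x, (f - g) x⟫) = fun x => ⟪k x, f x⟫ - ⟪k x, g x⟫ :=
    funext fun x => by simp [inner_sub_right]
  rw [hfg, integral_sub hif hig, hf.2 k hk, hg.2 k hk, sub_zero]

/-- `K` is closed under subtraction. -/
lemma mb_K_sub {μ : Measure X} {K : Set (X → V)} (hK : IsClosedL2Subspace μ K) :
    ∀ f ∈ K, ∀ g ∈ K, f - g ∈ K := by
  intro f hf g hg
  refine hK.ae_mem (hK.add_mem hf (hK.smul_mem (-1) hg)) ?_
  filter_upwards with x
  simp [sub_eq_add_neg]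

/-- Cross-orthogonality: an element of the `L^q`-closure of `OrthCompl K` pairs to zero
with an element of the `L^p`-closure of `K`. -/
lemma mb_cross {μ : Measure X} {K : Set (X → V)} (hK : IsClosedL2Subspace μ K)
    {q p : ℝ} (hconj : q.HolderConjugate p) {β α : X → V}
    (hβ : β ∈ LsCl μ (OrthCompl μ K) q) (hα : α ∈ LsCl μ K p) :
    ∫ x, ⟪β x, α x⟫ ∂μ = 0 := by
  have hq1 : (1:ℝ) ≤ q := hconj.lt.le
  have hQ1 : (1:ℝ≥0∞) ≤ ENNReal.ofReal q := by
    rw [show (1:ℝ≥0∞) = ENNReal.ofReal 1 by simp]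
    exact ENNReal.ofReal_le_ofReal hq1
  set Nα := (eLpNorm α (ENNReal.ofReal p) μ).toReal with hNα
  set Nβ := (eLpNorm β (ENNReal.ofReal q) μ).toReal with hNβ
  set I := ∫ x, ⟪β x, α x⟫ ∂μ with hI
  have key : ∀ ε : ℝ, 0 < ε → ε ≤ 1 → |I| ≤ ε * (Nα + Nβ + 1) := by
    intro ε hε hε1
    obtain ⟨g, hgK, hgL, hgc⟩ := hα.2 ε hε
    obtain ⟨h, hhO, hhL, hhc⟩ := hβ.2 ε hε
    have hβh : MemLp (β - h) (ENNReal.ofReal q) μ := hβ.1.sub hhL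
    have hαg : MemLp (α - g) (ENNReal.ofReal p) μ := hα.1.sub hgL
    have hold1 := mb_holder hconj hβh hα.1
    have hold2 := mb_holder hconj (hhL : MemLp h (ENNReal.ofReal q) μ) hαg
    have hold3 := mb_holder hconj (hhL : MemLp h (ENNReal.ofReal q) μ)
      (hgL : MemLp g (ENNReal.ofReal p) μ)
    have hdec : (fun x => ⟪β x, α x⟫) =
        fun x => ⟪(β - h) x, α x⟫ + (⟪h x, (α - g) x⟫ + ⟪h x, g x⟫) := by
      funext x
      simp only [Pi.sub_apply, inner_sub_left, inner_sub_right]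
      ring
    have hI3 : I = (∫ x, ⟪(β - h) x, α x⟫ ∂μ) +
        ((∫ x, ⟪h x, (α - g) x⟫ ∂μ) + (∫ x, ⟪h x, g x⟫ ∂μ)) := by
      have hg2 : Integrable (fun x => ⟪h x, (α - g) x⟫ + ⟪h x, g x⟫) μ :=
        hold2.1.add hold3.1
      rw [hI, hdec, integral_add hold1.1 hg2, integral_add hold2.1 hold3.1]
    have hz : ∫ x, ⟪h x, g x⟫ ∂μ = 0 := by
      have := hhO.2 g hgK
      rw [← this]
      exact integral_congr_ae (Filter.Eventually.of_forall fun x => real_inner_comm _ _)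
    -- numeric bounds
    have hb1 : (eLpNorm (β - h) (ENNReal.ofReal q) μ).toReal ≤ ε :=
      ENNReal.toReal_le_of_le_ofReal hε.le hhc.le
    have hb2 : (eLpNorm (α - g) (ENNReal.ofReal p) μ).toReal ≤ ε :=
      ENNReal.toReal_le_of_le_ofReal hε.le hgc.le
    have hb3 : (eLpNorm h (ENNReal.ofReal q) μ).toReal ≤ Nβ + ε := by
      have hle : eLpNorm h (ENNReal.ofReal q) μ ≤
          eLpNorm β (ENNReal.ofReal q) μ + ENNReal.ofReal ε := by
        have : eLpNorm h (ENNReal.ofReal q) μ = eLpNorm (β - (β - h)) (ENNReal.ofReal q) μ := by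
          congr 1; abel
        rw [this]
        exact (eLpNorm_sub_le hβ.1.1 hβh.1 hQ1).trans
          (add_le_add_right hhc.le _)
      have hfin : eLpNorm β (ENNReal.ofReal q) μ + ENNReal.ofReal ε ≠ ⊤ :=
        ENNReal.add_ne_top.mpr ⟨hβ.1.2.ne, ENNReal.ofReal_ne_top⟩
      calc (eLpNorm h (ENNReal.ofReal q) μ).toReal
          ≤ (eLpNorm β (ENNReal.ofReal q) μ + ENNReal.ofReal ε).toReal :=
            ENNReal.toReal_mono hfin hle
        _ = Nβ + ε := by
            rw [ENNReal.toReal_add hβ.1.2.ne ENNReal.ofReal_ne_top,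
              ENNReal.toReal_ofReal hε.le]
    have hNα0 : 0 ≤ Nα := ENNReal.toReal_nonneg
    have hNβ0 : 0 ≤ Nβ := ENNReal.toReal_nonneg
    calc |I| ≤ |∫ x, ⟪(β - h) x, α x⟫ ∂μ| +
        (|∫ x, ⟪h x, (α - g) x⟫ ∂μ| + |∫ x, ⟪h x, g x⟫ ∂μ|) := by
          rw [hI3]; exact (abs_add_le _ _).trans (by gcongr; exact abs_add_le _ _)
      _ ≤ ε * Nα + ((Nβ + ε) * ε + 0) := by
          rw [hz, abs_zero]
          gcongr
          · exact hold1.2.2.1.trans (by gcongr <;> simp [hb1, hNα])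
          · exact hold2.2.2.1.trans (by gcongr <;> simp [hb3, hb2])
      _ ≤ ε * (Nα + Nβ + 1) := by nlinarith
  by_contra hIne
  have habs : 0 < |I| := abs_pos.mpr hIne
  have hC : 0 < Nα + Nβ + 1 := by positivity
  set ε := min 1 (|I| / (2 * (Nα + Nβ + 1))) with hεdef
  have hεpos : 0 < ε := lt_min one_pos (by positivity)
  have := key ε hεpos (min_le_left _ _)
  have hle2 : ε * (Nα + Nβ + 1) ≤ |I| / 2 := by
    have : ε ≤ |I| / (2 * (Nα + Nβ + 1)) := min_le_right _ _
    calc ε * (Nα + Nβ + 1) ≤ (|I| / (2 * (Nα + Nβ + 1))) * (Nα + Nβ + 1) := by gcongr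
      _ = |I| / 2 := by field_simp
  linarith

/-- Extension of the `L^q` projection bound to the closures. -/
lemma mb_projext {μ : Measure X} {K : Set (X → V)} (hK : IsClosedL2Subspace μ K)
    {q : ℝ} (hq1 : 1 ≤ q) {M : ℝ} (hM0 : 0 ≤ M)
    (hM : ∀ ω γ : X → V, MemLp ω 2 μ → MemLs μ q ω → γ ∈ K →
      (ω - γ) ∈ OrthCompl μ K →
      eLpNorm γ (ENNReal.ofReal q) μ ≤ ENNReal.ofReal M * eLpNorm ω (ENNReal.ofReal q) μ)
    {w u : X → V} (hw : MemLp w (ENNReal.ofReal q) μ)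
    (hu : u ∈ LsCl μ K q) (hwu : (w - u) ∈ LsCl μ (OrthCompl μ K) q) :
    eLpNorm u (ENNReal.ofReal q) μ ≤ ENNReal.ofReal M * eLpNorm w (ENNReal.ofReal q) μ := by
  have hQ1 : (1:ℝ≥0∞) ≤ ENNReal.ofReal q := by
    rw [show (1:ℝ≥0∞) = ENNReal.ofReal 1 by simp]
    exact ENNReal.ofReal_le_ofReal hq1
  refine ENNReal.le_of_forall_pos_le_add fun ε' hε' hfin => ?_
  set ε : ℝ := (ε' : ℝ) / (2 * M + 1) with hεdef
  have hε : 0 < ε := div_pos (by exact_mod_cast hε') (by linarith)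
  obtain ⟨g, hgK, hgL, hgc⟩ := hu.2 ε hε
  obtain ⟨h, hhO, hhL, hhc⟩ := hwu.2 ε hε
  have hω2 : MemLp (g + h) 2 μ := (hK.mem_L2 g hgK).add hhO.1
  have hωq : MemLs μ q (g + h) := MemLp.add (hgL : MemLp g (ENNReal.ofReal q) μ) hhL
  have hωg : g + h - g = h := by abel
  have hbd := hM (g + h) g hω2 hωq hgK (by rw [hωg]; exact hhO)
  have hwuh : MemLp ((w - u) - h) (ENNReal.ofReal q) μ := hwu.1.sub hhL
  have hug : MemLp (u - g) (ENNReal.ofReal q) μ := hu.1.sub hgL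
  have h1 : eLpNorm (g + h) (ENNReal.ofReal q) μ ≤
      eLpNorm w (ENNReal.ofReal q) μ + ENNReal.ofReal (2 * ε) := by
    have hid : g + h = (w - ((w - u) - h)) - (u - g) := by abel
    rw [hid]
    calc eLpNorm ((w - ((w - u) - h)) - (u - g)) (ENNReal.ofReal q) μ
        ≤ eLpNorm (w - ((w - u) - h)) (ENNReal.ofReal q) μ +
            eLpNorm (u - g) (ENNReal.ofReal q) μ :=
          eLpNorm_sub_le (hw.1.sub hwuh.1) hug.1 hQ1
      _ ≤ (eLpNorm w (ENNReal.ofReal q) μ + eLpNorm ((w - u) - h) (ENNReal.ofReal q) μ) +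
            eLpNorm (u - g) (ENNReal.ofReal q) μ :=
          add_le_add_left (eLpNorm_sub_le hw.1 hwuh.1 hQ1) _
      _ ≤ (eLpNorm w (ENNReal.ofReal q) μ + ENNReal.ofReal ε) + ENNReal.ofReal ε :=
          add_le_add (add_le_add_right hhc.le _) hgc.le
      _ = eLpNorm w (ENNReal.ofReal q) μ + ENNReal.ofReal (2 * ε) := by
          rw [add_assoc, ← ENNReal.ofReal_add hε.le hε.le,
            show ε + ε = 2 * ε by ring]
  have h2 : eLpNorm u (ENNReal.ofReal q) μ ≤
      eLpNorm g (ENNReal.ofReal q) μ + ENNReal.ofReal ε := by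
    have hid : u = g + (u - g) := by abel
    calc eLpNorm u (ENNReal.ofReal q) μ
        = eLpNorm (g + (u - g)) (ENNReal.ofReal q) μ := by rw [← hid]
      _ ≤ eLpNorm g (ENNReal.ofReal q) μ + eLpNorm (u - g) (ENNReal.ofReal q) μ :=
          eLpNorm_add_le hgL.1 hug.1 hQ1
      _ ≤ _ := add_le_add_right hgc.le _
  calc eLpNorm u (ENNReal.ofReal q) μ
      ≤ eLpNorm g (ENNReal.ofReal q) μ + ENNReal.ofReal ε := h2
    _ ≤ ENNReal.ofReal M * eLpNorm (g + h) (ENNReal.ofReal q) μ + ENNReal.ofReal ε :=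
        add_le_add_left hbd _
    _ ≤ ENNReal.ofReal M * (eLpNorm w (ENNReal.ofReal q) μ + ENNReal.ofReal (2 * ε)) +
          ENNReal.ofReal ε := add_le_add_left (mul_le_mul_right h1 _) _
    _ = ENNReal.ofReal M * eLpNorm w (ENNReal.ofReal q) μ +
          (ENNReal.ofReal M * ENNReal.ofReal (2 * ε) + ENNReal.ofReal ε) := by
        rw [mul_add, add_assoc]
    _ ≤ ENNReal.ofReal M * eLpNorm w (ENNReal.ofReal q) μ + ε' := by
        gcongr
        rw [← ENNReal.ofReal_mul hM0, ← ENNReal.ofReal_add (by positivity) hε.le]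
        have : M * (2 * ε) + ε = (2 * M + 1) * ε := by ring
        rw [this, hεdef, mul_div_cancel₀ _ (by linarith : (2:ℝ) * M + 1 ≠ 0)]
        simp

set_option maxHeartbeats 1000000 in
/-- the Minty–Browder operator `T`.  Let `𝔄` be a `p`-structure and fix
`a ∈ L^p(X,V)`.  Let `T : L^p_+(X) → L^q_+(X)` be the map `Tα = Π₊(𝔄(·, a+α))`, encoded
here by the defining property that `Tα ∈ L^q_+(X)` with `𝔄(·, a+α) − Tα ∈ L^q_-(X)`.
Then `T` is (1) continuous, (2) strictly monotone and (3) coercive. -/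
theorem minty_browder_operator_properties
    (μ : Measure X) [SigmaFinite μ]
    (K : Set (X → V)) (hK : IsClosedL2Subspace μ K)
    (𝔮 : ℝ) (𝔭 : ℝ≥0∞) (h𝔮₁ : 1 ≤ 𝔮) (h𝔮₂ : 𝔮 < 2) (h𝔭 : 2 < 𝔭)
    (hconj : (ENNReal.ofReal 𝔮)⁻¹ + 𝔭⁻¹ = 1)
    (hproj : ∀ s : ℝ, 𝔮 < s → ENNReal.ofReal s < 𝔭 → ProjBounded μ K s)
    (p q : ℝ) (hp : 1 < p) (hpq : 1 / p + 1 / q = 1)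
    (h𝔮q : 𝔮 < q) (hqp : q ≤ p) (hp𝔭 : ENNReal.ofReal p < 𝔭)
    (A : X → V → V) (CA cA : ℝ) (hCA : 0 < CA) (hcA : 0 < cA)
    (hA : IsPStructure μ p A CA cA)
    (a : X → V) (ha : MemLs μ p a)
    (T : (X → V) → (X → V))
    (hT : ∀ α ∈ LsCl μ K p, T α ∈ LsCl μ K q ∧
      ((fun x => A x (a x + α x)) - T α) ∈ LsCl μ (OrthCompl μ K) q) :
    (∀ α ∈ LsCl μ K p, ∀ ε : ℝ, 0 < ε → ∃ δ : ℝ, 0 < δ ∧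
      ∀ α' ∈ LsCl μ K p,
        eLpNorm (α' - α) (ENNReal.ofReal p) μ < ENNReal.ofReal δ →
        eLpNorm (T α' - T α) (ENNReal.ofReal q) μ < ENNReal.ofReal ε) ∧
    (∀ α₁ ∈ LsCl μ K p, ∀ α₂ ∈ LsCl μ K p, ¬ α₁ =ᵐ[μ] α₂ →
      0 < ∫ x, ⟪T α₁ x - T α₂ x, α₁ x - α₂ x⟫ ∂μ) ∧
    (∀ M : ℝ, ∃ R : ℝ, ∀ α ∈ LsCl μ K p,
      R ≤ (eLpNorm α (ENNReal.ofReal p) μ).toReal →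
      M * (eLpNorm α (ENNReal.ofReal p) μ).toReal ≤ ∫ x, ⟪T α x, α x⟫ ∂μ) := by
  have hp0 : (0:ℝ) < p := by linarith
  have hq0 : (0:ℝ) < q := by
    rcases lt_or_ge 0 q with h | h
    · exact h
    · exfalso
      have h1 : 1 / q ≤ 0 := div_nonpos_of_nonneg_of_nonpos zero_le_one h
      have h2 : 1 / p < 1 := by rw [div_lt_one hp0]; exact hp
      linarith
  have hq1 : 1 < q := by
    have h1 : 1 / q < 1 := by
      have h2 : 0 < 1 / p := by positivity
      linarith
    rwa [div_lt_one hq0] at h1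
  have hconjqp : q.HolderConjugate p := by
    refine Real.holderConjugate_iff.mpr ⟨hq1, ?_⟩
    rw [← one_div, ← one_div, add_comm]
    exact hpq
  have hconjpq : p.HolderConjugate q := hconjqp.symm
  have hqp' : q * (p - 1) = p := by
    rw [mul_comm]
    exact hconjpq.sub_one_mul_conj
  have hp2 : 2 ≤ p := by
    nlinarith [mul_le_mul_of_nonneg_right hqp (by linarith : (0:ℝ) ≤ p - 1)]
  have hQ1 : (1:ℝ≥0∞) ≤ ENNReal.ofReal q := by
    rw [show (1:ℝ≥0∞) = ENNReal.ofReal 1 by simp]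
    exact ENNReal.ofReal_le_ofReal hq1.le
  have hP1 : (1:ℝ≥0∞) ≤ ENNReal.ofReal p := by
    rw [show (1:ℝ≥0∞) = ENNReal.ofReal 1 by simp]
    exact ENNReal.ofReal_le_ofReal (by linarith)
  have ha' : MemLp a (ENNReal.ofReal p) μ := ha
  have hmemA : ∀ γ : X → V, MemLp γ (ENNReal.ofReal p) μ →
      MemLp (fun x => A x (a x + γ x)) (ENNReal.ofReal q) μ := by
    intro γ hγm
    exact mb_memA hp hq0.le hqp' hA (ha'.add hγm)
  refine ⟨?_, ?_, ?_⟩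
  · -- (1) continuity
    intro α hα ε hε
    obtain ⟨M₀, hM₀⟩ := hproj q h𝔮q (lt_of_le_of_lt (ENNReal.ofReal_le_ofReal hqp) hp𝔭)
    set M := max M₀ 0 with hMdef
    have hM0 : 0 ≤ M := le_max_right _ _
    have hM : ∀ ω γ : X → V, MemLp ω 2 μ → MemLs μ q ω → γ ∈ K → (ω - γ) ∈ OrthCompl μ K →
        eLpNorm γ (ENNReal.ofReal q) μ ≤ ENNReal.ofReal M * eLpNorm ω (ENNReal.ofReal q) μ := by
      intro ω γ h1 h2 h3 h4
      exact (hM₀ ω γ h1 h2 h3 h4).1.trans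
        (mul_le_mul_left (ENNReal.ofReal_le_ofReal (le_max_left _ _)) _)
    set S : ℝ≥0∞ := eLpNorm a (ENNReal.ofReal p) μ + eLpNorm α (ENNReal.ofReal p) μ with hS
    have hSfin : S ≠ ⊤ := ENNReal.add_ne_top.mpr ⟨ha'.2.ne, hα.1.2.ne⟩
    set G : ℝ≥0∞ := 2 * S + 1 with hG
    have hGfin : G ≠ ⊤ := by
      rw [hG]
      exact ENNReal.add_ne_top.mpr
        ⟨ENNReal.mul_ne_top (by simp) hSfin, by simp⟩
    set D : ℝ≥0∞ := ENNReal.ofReal M * ENNReal.ofReal CA * G ^ (p - 2) with hD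
    have hDfin : D ≠ ⊤ := by
      rw [hD]
      exact ENNReal.mul_ne_top (ENNReal.mul_ne_top ENNReal.ofReal_ne_top ENNReal.ofReal_ne_top)
        (ENNReal.rpow_lt_top_of_nonneg (by linarith) hGfin).ne
    set Dr := D.toReal with hDr
    set δ := min 1 (ε / (2 * (Dr + 1))) with hδ
    have hδpos : 0 < δ := lt_min one_pos (div_pos hε (by positivity))
    refine ⟨δ, hδpos, ?_⟩
    intro α' hα' hclose
    have hTd : T α' - T α ∈ LsCl μ K q :=
      mb_sub_LsCl hq1.le (mb_K_sub hK) (hT α' hα').1 (hT α hα).1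
    set w : X → V := (fun x => A x (a x + α' x)) - fun x => A x (a x + α x) with hw
    have hwQ : MemLp w (ENNReal.ofReal q) μ := (hmemA α' hα'.1).sub (hmemA α hα.1)
    have hwd : w - (T α' - T α) ∈ LsCl μ (OrthCompl μ K) q := by
      have hid : w - (T α' - T α) =
          ((fun x => A x (a x + α' x)) - T α') - ((fun x => A x (a x + α x)) - T α) := by
        rw [hw]; abel
      rw [hid]
      exact mb_sub_LsCl hq1.le (mb_orth_sub hK) (hT α' hα').2 (hT α hα).2
    have hproj1 : eLpNorm (T α' - T α) (ENNReal.ofReal q) μ ≤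
        ENNReal.ofReal M * eLpNorm w (ENNReal.ofReal q) μ :=
      mb_projext hK hq1.le hM0 hM hwQ hTd hwd
    set ψ : X → V := α' - α with hψ
    have hψP : MemLp ψ (ENNReal.ofReal p) μ := hα'.1.sub hα.1
    have hψδ : eLpNorm ψ (ENNReal.ofReal p) μ < ENNReal.ofReal δ := hclose
    have hψ1 : eLpNorm ψ (ENNReal.ofReal p) μ ≤ 1 := by
      refine hψδ.le.trans ?_
      calc ENNReal.ofReal δ ≤ ENNReal.ofReal 1 :=
          ENNReal.ofReal_le_ofReal (min_le_left _ _)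
        _ = 1 := by simp
    set b : X → ℝ := fun x => ‖a x + α' x‖ + ‖a x + α x‖ with hb
    set φ : X → ℝ := fun x => CA * b x ^ (p - 2) with hφ
    have hv1 : MemLp (fun x => a x + α' x) (ENNReal.ofReal p) μ := ha'.add hα'.1
    have hv2 : MemLp (fun x => a x + α x) (ENNReal.ofReal p) μ := ha'.add hα.1
    have hwb : ∀ᵐ x ∂μ, ‖w x‖ ≤ ‖(φ • ψ) x‖ := by
      filter_upwards [hA.lipschitz] with x hx
      have h1 := hx (a x + α' x) (a x + α x)
      have h2 : a x + α' x - (a x + α x) = α' x - α x := by abel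
      rw [h2] at h1
      have h3 : ‖(φ • ψ) x‖ = CA * (b x ^ (p - 2) * ‖α' x - α x‖) := by
        simp only [Pi.smul_apply', hφ, hψ, Pi.sub_apply, norm_smul, Real.norm_eq_abs]
        rw [abs_of_nonneg (by positivity)]
        ring
      rw [h3]
      simpa [hw] using h1
    -- eLpNorm of `b`
    have hbnorm : eLpNorm b (ENNReal.ofReal p) μ ≤ G := by
      have hb1 : eLpNorm b (ENNReal.ofReal p) μ ≤
          eLpNorm (fun x => a x + α' x) (ENNReal.ofReal p) μ +
            eLpNorm (fun x => a x + α x) (ENNReal.ofReal p) μ := by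
        have h4 : eLpNorm b (ENNReal.ofReal p) μ ≤
            eLpNorm (fun x => ‖a x + α' x‖) (ENNReal.ofReal p) μ +
              eLpNorm (fun x => ‖a x + α x‖) (ENNReal.ofReal p) μ :=
          eLpNorm_add_le hv1.1.norm hv2.1.norm hP1
        simpa [eLpNorm_norm] using h4
      have hv1b : eLpNorm (fun x => a x + α' x) (ENNReal.ofReal p) μ ≤ S + 1 := by
        have hide : (fun x => a x + α' x) = (fun x => a x + α x) + ψ := by
          funext x
          simp only [hψ, Pi.add_apply, Pi.sub_apply]
          abel
        rw [hide]
        calc eLpNorm ((fun x => a x + α x) + ψ) (ENNReal.ofReal p) μ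
            ≤ eLpNorm (fun x => a x + α x) (ENNReal.ofReal p) μ +
              eLpNorm ψ (ENNReal.ofReal p) μ := eLpNorm_add_le hv2.1 hψP.1 hP1
          _ ≤ S + 1 := by
              refine add_le_add ?_ hψ1
              rw [hS]
              exact eLpNorm_add_le ha'.1 hα.1.1 hP1
      have hv2b : eLpNorm (fun x => a x + α x) (ENNReal.ofReal p) μ ≤ S := by
        rw [hS]
        exact eLpNorm_add_le ha'.1 hα.1.1 hP1
      calc eLpNorm b (ENNReal.ofReal p) μ ≤ _ := hb1
        _ ≤ (S + 1) + S := add_le_add hv1b hv2b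
        _ = G := by rw [hG]; ring
    have hwQle : eLpNorm w (ENNReal.ofReal q) μ ≤
        ENNReal.ofReal CA * G ^ (p - 2) * eLpNorm ψ (ENNReal.ofReal p) μ := by
      have hmono := eLpNorm_mono_ae (p := ENNReal.ofReal q) hwb
      have hbm : AEStronglyMeasurable b μ := hv1.1.norm.add hv2.1.norm
      have hφm : AEStronglyMeasurable φ μ := by
        have h5 : AEStronglyMeasurable (fun x => b x ^ (p - 2)) μ :=
          (hbm.aemeasurable.pow_const _).aestronglyMeasurable
        exact h5.const_mul CA
      rcases eq_or_lt_of_le hp2 with hpe | hpl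
      · -- p = 2
        have hqe : q = p := by
          rw [← hpe] at hqp' ⊢
          linarith
        have hφc : (φ • ψ) = CA • ψ := by
          funext x
          simp [Pi.smul_apply', hφ, show p - 2 = 0 by rw [← hpe]; ring, Real.rpow_zero]
        have h6 : eLpNorm (φ • ψ) (ENNReal.ofReal q) μ =
            ENNReal.ofReal CA * eLpNorm ψ (ENNReal.ofReal p) μ := by
          rw [hφc, hqe, eLpNorm_const_smul, Real.enorm_eq_ofReal hCA.le]
        calc eLpNorm w (ENNReal.ofReal q) μ ≤ eLpNorm (φ • ψ) (ENNReal.ofReal q) μ := hmono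
          _ = ENNReal.ofReal CA * eLpNorm ψ (ENNReal.ofReal p) μ := h6
          _ ≤ _ := by
              rw [show p - 2 = 0 by rw [← hpe]; ring, ENNReal.rpow_zero, mul_one]
      · -- 2 < p
        have hp2pos : (0:ℝ) < p - 2 := by linarith
        set r : ℝ≥0∞ := ENNReal.ofReal (p / (p - 2)) with hr
        have hrcond : 1 / (ENNReal.ofReal q) = 1 / r + 1 / (ENNReal.ofReal p) := by
          rw [hr]
          simp only [one_div]
          rw [← ENNReal.ofReal_inv_of_pos hq0,
            ← ENNReal.ofReal_inv_of_pos (by positivity : (0:ℝ) < p / (p - 2)),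
            ← ENNReal.ofReal_inv_of_pos hp0,
            ← ENNReal.ofReal_add (by positivity) (by positivity)]
          congr 1
          rw [inv_div]
          have h1q : 1 / q = 1 - 1 / p := by linarith
          field_simp at h1q ⊢
          linarith
        have hsmul : eLpNorm (φ • ψ) (ENNReal.ofReal q) μ ≤
            eLpNorm φ r μ * eLpNorm ψ (ENNReal.ofReal p) μ :=
          by
            haveI : ENNReal.HolderTriple r (ENNReal.ofReal p) (ENNReal.ofReal q) :=
              ⟨by simpa only [one_div] using hrcond.symm⟩
            exact eLpNorm_smul_le_mul_eLpNorm hψP.1 hφm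
        have hφr : eLpNorm φ r μ ≤ ENNReal.ofReal CA * G ^ (p - 2) := by
          have heφ : φ = CA • (fun x => ‖b x‖ ^ (p - 2)) := by
            funext x
            have hbx : (0:ℝ) ≤ b x := by
              simp only [hb]
              positivity
            simp only [hφ, Pi.smul_apply, smul_eq_mul]
            rw [Real.norm_of_nonneg hbx]
          rw [heφ, eLpNorm_const_smul, Real.enorm_eq_ofReal hCA.le]
          refine mul_le_mul_right ?_ _
          rw [eLpNorm_norm_rpow b hp2pos]
          have hrp : r * ENNReal.ofReal (p - 2) = ENNReal.ofReal p := by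
            rw [hr, ← ENNReal.ofReal_mul (by positivity)]
            congr 1
            field_simp
          rw [hrp]
          exact ENNReal.rpow_le_rpow hbnorm (by linarith)
        calc eLpNorm w (ENNReal.ofReal q) μ ≤ eLpNorm (φ • ψ) (ENNReal.ofReal q) μ := hmono
          _ ≤ eLpNorm φ r μ * eLpNorm ψ (ENNReal.ofReal p) μ := hsmul
          _ ≤ _ := mul_le_mul_left hφr _
    have hfinal : eLpNorm (T α' - T α) (ENNReal.ofReal q) μ ≤
        D * eLpNorm ψ (ENNReal.ofReal p) μ := by
      refine hproj1.trans ?_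
      calc ENNReal.ofReal M * eLpNorm w (ENNReal.ofReal q) μ
          ≤ ENNReal.ofReal M *
            (ENNReal.ofReal CA * G ^ (p - 2) * eLpNorm ψ (ENNReal.ofReal p) μ) :=
            mul_le_mul_right hwQle _
        _ = D * eLpNorm ψ (ENNReal.ofReal p) μ := by rw [hD]; ring
    have hstep : D * eLpNorm ψ (ENNReal.ofReal p) μ ≤ D * ENNReal.ofReal δ :=
      mul_le_mul_right hψδ.le _
    have hlt : D * ENNReal.ofReal δ < ENNReal.ofReal ε := by
      have hDeq : D = ENNReal.ofReal Dr := (ENNReal.ofReal_toReal hDfin).symm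
      have hDr0 : 0 ≤ Dr := ENNReal.toReal_nonneg
      calc D * ENNReal.ofReal δ ≤ D * ENNReal.ofReal (ε / (2 * (Dr + 1))) :=
          mul_le_mul_right (ENNReal.ofReal_le_ofReal (min_le_right _ _)) _
        _ = ENNReal.ofReal (Dr * (ε / (2 * (Dr + 1)))) := by
            rw [hDeq, ← ENNReal.ofReal_mul hDr0]
        _ < ENNReal.ofReal ε := by
            rw [ENNReal.ofReal_lt_ofReal_iff hε]
            have h2 : (0:ℝ) < 2 * (Dr + 1) := by positivity
            have h3 : Dr * (ε / (2 * (Dr + 1))) = (Dr / (2 * (Dr + 1))) * ε := by ring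
            rw [h3]
            have h4 : Dr / (2 * (Dr + 1)) < 1 := (div_lt_one h2).mpr (by linarith)
            nlinarith
    exact lt_of_le_of_lt (hfinal.trans hstep) hlt
  · -- (2) strict monotonicity
    intro α₁ hα₁ α₂ hα₂ hne
    have hm1 := hmemA α₁ hα₁.1
    have hm2 := hmemA α₂ hα₂.1
    have hd : α₁ - α₂ ∈ LsCl μ K p :=
      mb_sub_LsCl (by linarith : (1:ℝ) ≤ p) (mb_K_sub hK) hα₁ hα₂
    have hβd : ((fun x => A x (a x + α₁ x)) - T α₁) -
        ((fun x => A x (a x + α₂ x)) - T α₂) ∈ LsCl μ (OrthCompl μ K) q :=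
      mb_sub_LsCl hq1.le (mb_orth_sub hK) (hT α₁ hα₁).2 (hT α₂ hα₂).2
    have hdP : MemLp (α₁ - α₂) (ENNReal.ofReal p) μ := hα₁.1.sub hα₂.1
    have hAAQ : MemLp ((fun x => A x (a x + α₁ x)) - fun x => A x (a x + α₂ x))
        (ENNReal.ofReal q) μ := hm1.sub hm2
    have hint1 := mb_holder hconjqp hAAQ hdP
    have hint2 := mb_holder hconjqp (hβd.1 : MemLp _ (ENNReal.ofReal q) μ) hdP
    have hcross0 : ∫ x, ⟪((((fun x => A x (a x + α₁ x)) - T α₁) -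
        ((fun x => A x (a x + α₂ x)) - T α₂)) x), (α₁ - α₂) x⟫ ∂μ = 0 :=
      mb_cross hK hconjqp hβd hd
    have hidt : (fun x => ⟪T α₁ x - T α₂ x, α₁ x - α₂ x⟫) =
        fun x => ⟪((fun x => A x (a x + α₁ x)) - fun x => A x (a x + α₂ x)) x, (α₁ - α₂) x⟫ -
          ⟪((((fun x => A x (a x + α₁ x)) - T α₁) -
            ((fun x => A x (a x + α₂ x)) - T α₂)) x), (α₁ - α₂) x⟫ := by
      funext x
      simp only [Pi.sub_apply]
      rw [← inner_sub_left]
      congr 1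
      abel
    rw [hidt, integral_sub hint1.1 hint2.1, hcross0, sub_zero]
    have hmono : ∀ᵐ x ∂μ,
        cA * ((‖a x + α₁ x‖ + ‖a x + α₂ x‖) ^ (p - 2) * ‖α₁ x - α₂ x‖ ^ (2:ℝ)) ≤
          ⟪((fun x => A x (a x + α₁ x)) - fun x => A x (a x + α₂ x)) x, (α₁ - α₂) x⟫ := by
      filter_upwards [hA.monotone] with x hx
      have h1 := hx (a x + α₁ x) (a x + α₂ x)
      have h2 : a x + α₁ x - (a x + α₂ x) = α₁ x - α₂ x := by abel
      rw [h2] at h1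
      simpa using h1
    have hnn : ∀ᵐ x ∂μ, 0 ≤
        ⟪((fun x => A x (a x + α₁ x)) - fun x => A x (a x + α₂ x)) x, (α₁ - α₂) x⟫ := by
      filter_upwards [hmono] with x hx
      refine le_trans ?_ hx
      positivity
    have h0le : 0 ≤ ∫ x,
        ⟪((fun x => A x (a x + α₁ x)) - fun x => A x (a x + α₂ x)) x, (α₁ - α₂) x⟫ ∂μ :=
      integral_nonneg_of_ae hnn
    rcases h0le.lt_or_eq with hlt | heq
    · exact hlt
    · exfalso
      have hz : (fun x =>
          ⟪((fun x => A x (a x + α₁ x)) - fun x => A x (a x + α₂ x)) x, (α₁ - α₂) x⟫) =ᵐ[μ]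
          0 := (integral_eq_zero_iff_of_nonneg_ae hnn hint1.1).mp heq.symm
      apply hne
      filter_upwards [hz, hmono] with x h1 h2
      by_contra hxne
      have hd0 : α₁ x - α₂ x ≠ 0 := sub_ne_zero.mpr hxne
      have hdn : 0 < ‖α₁ x - α₂ x‖ := norm_pos_iff.mpr hd0
      have hbpos : 0 < ‖a x + α₁ x‖ + ‖a x + α₂ x‖ := by
        calc (0:ℝ) < ‖α₁ x - α₂ x‖ := hdn
          _ = ‖(a x + α₁ x) - (a x + α₂ x)‖ := by
              rw [show (a x + α₁ x) - (a x + α₂ x) = α₁ x - α₂ x by abel]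
          _ ≤ _ := norm_sub_le _ _
      have hpos : 0 < cA * ((‖a x + α₁ x‖ + ‖a x + α₂ x‖) ^ (p - 2) *
          ‖α₁ x - α₂ x‖ ^ (2:ℝ)) :=
        mul_pos hcA (mul_pos (Real.rpow_pos_of_pos hbpos _) (Real.rpow_pos_of_pos hdn _))
      have h3 :
          ⟪((fun x => A x (a x + α₁ x)) - fun x => A x (a x + α₂ x)) x, (α₁ - α₂) x⟫ = 0 := h1
      linarith
  · -- (3) coercivity
    intro M
    have hAa : MemLp (fun x => A x (a x)) (ENNReal.ofReal q) μ := by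
      have h0 : MemLp (fun x => A x (a x + (0:X → V) x)) (ENNReal.ofReal q) μ :=
        hmemA 0 (MemLp.zero)
      refine h0.ae_eq ?_
      filter_upwards with x
      simp
    set Ca := (eLpNorm (fun x => A x (a x)) (ENNReal.ofReal q) μ).toReal with hCa
    have hCa0 : 0 ≤ Ca := ENNReal.toReal_nonneg
    refine ⟨max 1 ((max 0 (M + Ca) / cA) ^ (p - 1)⁻¹), ?_⟩
    intro α hα hRN
    set N := (eLpNorm α (ENNReal.ofReal p) μ).toReal with hN
    have hN1 : 1 ≤ N := le_trans (le_max_left _ _) hRN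
    have hN0 : 0 < N := by linarith
    have hαP : MemLp α (ENNReal.ofReal p) μ := hα.1
    have hm := hmemA α hαP
    have hold := mb_holder hconjqp hm hαP
    have holdA := mb_holder hconjqp hAa hαP
    have hβ := (hT α hα).2
    have holdβ := mb_holder hconjqp (hβ.1 : MemLp _ (ENNReal.ofReal q) μ) hαP
    have hcross0 : ∫ x, ⟪(((fun x => A x (a x + α x)) - T α) x), α x⟫ ∂μ = 0 :=
      mb_cross hK hconjqp hβ (hα : α ∈ LsCl μ K p)
    have hidT : (fun x => ⟪T α x, α x⟫) = fun x =>
        ⟪A x (a x + α x), α x⟫ - ⟪(((fun x => A x (a x + α x)) - T α) x), α x⟫ := by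
      funext x
      simp only [Pi.sub_apply]
      rw [← inner_sub_left]
      congr 1
      abel
    have hTeq : ∫ x, ⟪T α x, α x⟫ ∂μ = ∫ x, ⟪A x (a x + α x), α x⟫ ∂μ := by
      rw [hidT, integral_sub hold.1 holdβ.1, hcross0, sub_zero]
    have hptw : ∀ᵐ x ∂μ,
        cA * ‖α x‖ ^ p - ‖A x (a x)‖ * ‖α x‖ ≤ ⟪A x (a x + α x), α x⟫ := by
      filter_upwards [hA.monotone] with x hx
      have h1 := hx (a x + α x) (a x)
      have h2 : a x + α x - a x = α x := by abel
      rw [h2] at h1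
      have h3 : ‖α x‖ ^ p ≤ (‖a x + α x‖ + ‖a x‖) ^ (p - 2) * ‖α x‖ ^ (2:ℝ) := by
        rcases eq_or_ne (α x) 0 with hz | hz
        · simp [hz, Real.zero_rpow (by positivity : p ≠ 0),
            Real.zero_rpow (two_ne_zero (α := ℝ))]
        · have hzn : 0 < ‖α x‖ := norm_pos_iff.mpr hz
          have hle : ‖α x‖ ≤ ‖a x + α x‖ + ‖a x‖ := by
            calc ‖α x‖ = ‖(a x + α x) - a x‖ := by rw [h2]
              _ ≤ _ := norm_sub_le _ _
          calc ‖α x‖ ^ p = ‖α x‖ ^ (p - 2) * ‖α x‖ ^ (2:ℝ) := by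
                rw [← Real.rpow_add hzn]
                norm_num
            _ ≤ (‖a x + α x‖ + ‖a x‖) ^ (p - 2) * ‖α x‖ ^ (2:ℝ) :=
                mul_le_mul_of_nonneg_right
                  (Real.rpow_le_rpow (norm_nonneg _) hle (by linarith))
                  (Real.rpow_nonneg (norm_nonneg _) _)
      have h4 : -(‖A x (a x)‖ * ‖α x‖) ≤ ⟪A x (a x), α x⟫ :=
        (abs_le.mp (abs_real_inner_le_norm _ _)).1
      have h5 : ⟪A x (a x + α x), α x⟫ =
          ⟪A x (a x + α x) - A x (a x), α x⟫ + ⟪A x (a x), α x⟫ := by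
        rw [inner_sub_left]; ring
      have h6 : cA * (‖α x‖ ^ p) ≤
          cA * ((‖a x + α x‖ + ‖a x‖) ^ (p - 2) * ‖α x‖ ^ (2:ℝ)) :=
        mul_le_mul_of_nonneg_left h3 hcA.le
      linarith
    have hgint1 : Integrable (fun x => ‖α x‖ ^ p) μ := by
      have h7 := hαP.integrable_norm_rpow (by simp [hp0]) (by simp)
      simpa [ENNReal.toReal_ofReal hp0.le] using h7
    have hgint : Integrable (fun x => cA * ‖α x‖ ^ p - ‖A x (a x)‖ * ‖α x‖) μ :=
      (hgint1.const_mul cA).sub holdA.2.1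
    have hIge : cA * N ^ p - Ca * N ≤ ∫ x, ⟪A x (a x + α x), α x⟫ ∂μ := by
      have hmon := integral_mono_ae hgint hold.1 hptw
      have he1 : ∫ x, (cA * ‖α x‖ ^ p - ‖A x (a x)‖ * ‖α x‖) ∂μ =
          cA * ∫ x, ‖α x‖ ^ p ∂μ - ∫ x, ‖A x (a x)‖ * ‖α x‖ ∂μ := by
        rw [integral_sub (hgint1.const_mul cA) holdA.2.1, integral_const_mul]
      have he2 : ∫ x, ‖α x‖ ^ p ∂μ = N ^ p := mb_integral_norm_rpow hp0 hαP
      have he3 : ∫ x, ‖A x (a x)‖ * ‖α x‖ ∂μ ≤ Ca * N := holdA.2.2.2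
      rw [he1, he2] at hmon
      linarith
    have hRkey : max 0 (M + Ca) ≤ cA * N ^ (p - 1) := by
      have hc0 : (0:ℝ) ≤ max 0 (M + Ca) := le_max_left _ _
      have hR2 : (max 0 (M + Ca) / cA) ^ (p - 1)⁻¹ ≤ N := le_trans (le_max_right _ _) hRN
      have hcc : max 0 (M + Ca) / cA ≤ N ^ (p - 1) := by
        calc max 0 (M + Ca) / cA = ((max 0 (M + Ca) / cA) ^ (p - 1)⁻¹) ^ (p - 1) :=
              (Real.rpow_inv_rpow (by positivity) (by
                have : (0:ℝ) < p - 1 := by linarith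
                exact this.ne')).symm
          _ ≤ N ^ (p - 1) := Real.rpow_le_rpow (by positivity) hR2 (by linarith)
      calc max 0 (M + Ca) = (max 0 (M + Ca) / cA) * cA := by field_simp
        _ ≤ N ^ (p - 1) * cA := mul_le_mul_of_nonneg_right hcc hcA.le
        _ = cA * N ^ (p - 1) := mul_comm _ _
    have hNp : N ^ p = N ^ (p - 1) * N := by
      have h8 := Real.rpow_add_one hN0.ne' (p - 1)
      rw [sub_add_cancel] at h8
      exact h8
    have hfin : M * N ≤ cA * N ^ p - Ca * N := by
      have h1 : M + Ca ≤ max 0 (M + Ca) := le_max_right _ _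
      have h2 : (M + Ca) * N ≤ (cA * N ^ (p - 1)) * N :=
        mul_le_mul_of_nonneg_right (h1.trans hRkey) hN0.le
      have h3 : (cA * N ^ (p - 1)) * N = cA * N ^ p := by rw [hNp]; ring
      nlinarith
    calc M * N ≤ cA * N ^ p - Ca * N := hfin
      _ ≤ ∫ x, ⟪A x (a x + α x), α x⟫ ∂μ := hIge
      _ = ∫ x, ⟪T α x, α x⟫ ∂μ := hTeq.symm
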